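/- Let X̂ be the Alexandroff strict compactification of a weakly normal gts X with X_top locally compact Hausdorff and non-compact. Then the extension operator Ex_{X̂} is finitely additive (i.e., {Ex_{X̂}(U) : U ∈ Op_X} is stable under finite unions) if and only if for every pair A, B of disjoint closed sets of X, at least one of A, B is topologically compact. -/

import Mathlib

open Set TopologicalSpace Topology

universe u

/-- A generalized topology in the sense of Delfs–Knebusch (axioms following
Piękosz, Definition 2.2.1): `Cov` is the collection of admissible open families,
and the open sets are the members of `⋃₀ Cov`. -/
structure GenTop (X : Type u) : Type u where
  Cov : Set (Set (Set X))
  univ_open : Set.univ ∈ ⋃₀ Cov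
  finite_admissible : ∀ 𝒰 : Set (Set X), 𝒰.Finite → 𝒰 ⊆ ⋃₀ Cov → 𝒰 ∈ Cov
  union_open : ∀ 𝒰 ∈ Cov, ⋃₀ 𝒰 ∈ ⋃₀ Cov
  restrict : ∀ 𝒰 ∈ Cov, ∀ V ∈ ⋃₀ Cov, (fun U => V ∩ U) '' 𝒰 ∈ Cov
  transitive : ∀ 𝒰 ∈ Cov, ∀ f : Set X → Set (Set X),
    (∀ U ∈ 𝒰, f U ∈ Cov ∧ ⋃₀ f U = U) → {V : Set X | ∃ U ∈ 𝒰, V ∈ f U} ∈ Cov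
  coarsen : ∀ 𝒰 ∈ Cov, ∀ 𝒱 ⊆ ⋃₀ Cov, (∀ U ∈ 𝒰, ∃ V ∈ 𝒱, U ⊆ V) →
    ⋃₀ 𝒱 = ⋃₀ 𝒰 → 𝒱 ∈ Cov
  regular : ∀ 𝒰 ∈ Cov, ∀ W ⊆ ⋃₀ 𝒰, (∀ U ∈ 𝒰, W ∩ U ∈ ⋃₀ Cov) → W ∈ ⋃₀ Cov

namespace GenTop

variable {X : Type u} (G : GenTop X)

/-- The open sets of a gts. -/
def Opens : Set (Set X) := ⋃₀ G.Cov

/-- The closed sets of a gts. -/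
def Closeds : Set (Set X) := {A : Set X | Aᶜ ∈ G.Opens}

/-- The topologization of a gts: the topology generated by the open sets. -/
def topol : TopologicalSpace X := TopologicalSpace.generateFrom G.Opens

/-- A gts is weakly normal if disjoint sets, each a singleton or closed,
can be separated by disjoint open sets. -/
def WeaklyNormal : Prop :=
  ∀ A₁ A₂ : Set X, ((∃ x, A₁ = {x}) ∨ A₁ ∈ G.Closeds) →
    ((∃ x, A₂ = {x}) ∨ A₂ ∈ G.Closeds) → Disjoint A₁ A₂ →
    ∃ W₁ ∈ G.Opens, ∃ W₂ ∈ G.Opens, Disjoint W₁ W₂ ∧ A₁ ⊆ W₁ ∧ A₂ ⊆ W₂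

end GenTop

/-- The topologization of the Alexandroff strict compactification `X̂ = X ∪ {∞}`
(realized as `Option X` with `∞ = none`): generated by the opens of `X` and the
complements of topologically compact closed sets of `X`. -/
def hatTop {X : Type u} (G : GenTop X) : TopologicalSpace (Option X) :=
  TopologicalSpace.generateFrom
    ({W : Set (Option X) | ∃ U ∈ G.Opens, W = some '' U} ∪
     {W : Set (Option X) | ∃ C ∈ G.Closeds, @IsCompact X G.topol C ∧ W = (some '' C)ᶜ})

/-- The extension operator of the Alexandroff strict compactification:
`Ex_{X̂}(U) = X̂ ∖ cl_{X̂_top}(X ∖ U)`. -/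
def ExHat {X : Type u} (G : GenTop X) (U : Set X) : Set (Option X) :=
  (@closure _ (hatTop G) (some '' Uᶜ))ᶜ

section Aux

variable {X : Type u} (G : GenTop X)

namespace GenTop

lemma mem_opens_of_mem_cov {𝒰 : Set (Set X)} (h : 𝒰 ∈ G.Cov) {U : Set X} (hU : U ∈ 𝒰) :
    U ∈ G.Opens := ⟨𝒰, h, hU⟩

lemma singleton_mem_cov {U : Set X} (hU : U ∈ G.Opens) : {U} ∈ G.Cov :=
  G.finite_admissible {U} (finite_singleton U) (singleton_subset_iff.mpr hU)

lemma opens_inter {U V : Set X} (hU : U ∈ G.Opens) (hV : V ∈ G.Opens) :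
    U ∩ V ∈ G.Opens := by
  have := G.restrict {V} (G.singleton_mem_cov hV) U hU
  exact G.mem_opens_of_mem_cov this ⟨V, rfl, rfl⟩

lemma opens_sUnion_finite {𝒰 : Set (Set X)} (hfin : 𝒰.Finite) (h : 𝒰 ⊆ G.Opens) :
    ⋃₀ 𝒰 ∈ G.Opens :=
  G.union_open 𝒰 (G.finite_admissible 𝒰 hfin h)

lemma opens_union {U V : Set X} (hU : U ∈ G.Opens) (hV : V ∈ G.Opens) :
    U ∪ V ∈ G.Opens := by
  have := G.opens_sUnion_finite (𝒰 := {U, V}) (by simp) (by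
    intro W hW; rcases hW with h | h <;> subst h <;> assumption)
  simpa using this

lemma opens_univ : (univ : Set X) ∈ G.Opens := G.univ_open

lemma closeds_empty : (∅ : Set X) ∈ G.Closeds := by
  simp [GenTop.Closeds, G.opens_univ]

lemma isOpen_of_opens {U : Set X} (hU : U ∈ G.Opens) : IsOpen[G.topol] U :=
  TopologicalSpace.GenerateOpen.basic U hU

lemma isClosed_of_closeds {A : Set X} (hA : A ∈ G.Closeds) : IsClosed[G.topol] A := by
  letI := G.topol
  rw [← isOpen_compl_iff]
  exact G.isOpen_of_opens hA

/-- The gts-opens form a (neighborhood) basis for the topologization. -/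
lemma exists_opens_basis {s : Set X} (hs : IsOpen[G.topol] s) {x : X} (hx : x ∈ s) :
    ∃ U ∈ G.Opens, x ∈ U ∧ U ⊆ s := by
  induction hs with
  | basic U hU => exact ⟨U, hU, hx, le_refl _⟩
  | univ => exact ⟨univ, G.opens_univ, trivial, le_refl _⟩
  | inter s t _ _ ihs iht =>
      obtain ⟨U, hU, hxU, hUs⟩ := ihs hx.1
      obtain ⟨V, hV, hxV, hVt⟩ := iht hx.2
      exact ⟨U ∩ V, G.opens_inter hU hV, ⟨hxU, hxV⟩,
        subset_inter (fun y hy => hUs hy.1) (fun y hy => hVt hy.2)⟩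
  | sUnion S hS ih =>
      obtain ⟨t, htS, hxt⟩ := hx
      obtain ⟨U, hU, hxU, hUt⟩ := ih t htS hxt
      exact ⟨U, hU, hxU, hUt.trans (subset_sUnion_of_mem htS)⟩

/-- Key lemma: a compact set is included in a gts-open set with compact closure. -/
lemma exists_open_relcompact (hlc : @LocallyCompactSpace X G.topol)
    (h2 : @T2Space X G.topol) {K : Set X} (hK : @IsCompact X G.topol K) :
    ∃ O ∈ G.Opens, K ⊆ O ∧ @IsCompact X G.topol (@closure X G.topol O) := by
  letI := G.topol
  have hnbhd : ∀ x : X, ∃ O : Set X, O ∈ G.Opens ∧ x ∈ O ∧ IsCompact (closure O) := by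
    intro x
    obtain ⟨n, hn, -, hncpt⟩ := hlc.local_compact_nhds x univ Filter.univ_mem
    obtain ⟨s, hsn, hsopen, hxs⟩ := mem_nhds_iff.mp hn
    obtain ⟨O, hO, hxO, hOs⟩ := G.exists_opens_basis hsopen hxs
    refine ⟨O, hO, hxO, ?_⟩
    exact hncpt.of_isClosed_subset isClosed_closure
      ((closure_mono (hOs.trans hsn)).trans (le_of_eq hncpt.isClosed.closure_eq))
  choose f hf1 hf2 hf3 using hnbhd
  obtain ⟨t, -, hcov⟩ := hK.elim_nhds_subcover f
    (fun x _ => (G.isOpen_of_opens (hf1 x)).mem_nhds (hf2 x))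
  refine ⟨⋃ x ∈ t, f x, ?_, hcov, ?_⟩
  · have : (⋃ x ∈ t, f x) = ⋃₀ (f '' ↑t) := by simp [sUnion_image]
    rw [this]
    exact G.opens_sUnion_finite (t.finite_toSet.image f)
      (by rintro _ ⟨x, -, rfl⟩; exact hf1 x)
  · have hsub : closure (⋃ x ∈ t, f x) ⊆ ⋃ x ∈ t, closure (f x) :=
      closure_minimal (iUnion₂_mono fun x _ => subset_closure)
        (t.finite_toSet.isClosed_biUnion fun x _ => isClosed_closure)
    exact (t.finite_toSet.isCompact_biUnion fun x _ => hf3 x).of_isClosed_subset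
      isClosed_closure hsub

end GenTop

lemma compl_some_image {X : Type u} (A : Set X) :
    (some '' A)ᶜ = some '' Aᶜ ∪ {none} := by
  ext (_ | x) <;> simp

lemma isOpen_hat_some_image {U : Set X} (hU : U ∈ G.Opens) :
    @IsOpen _ (hatTop G) (some '' U) :=
  TopologicalSpace.GenerateOpen.basic _ (Or.inl ⟨U, hU, rfl⟩)

lemma isOpen_hat_compl {C : Set X} (hC : C ∈ G.Closeds) (hcpt : @IsCompact X G.topol C) :
    @IsOpen _ (hatTop G) (some '' C)ᶜ :=
  TopologicalSpace.GenerateOpen.basic _ (Or.inr ⟨C, hC, hcpt, rfl⟩)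

/-- Every hatTop-open set containing `∞` contains the complement of a compact closed set. -/
lemma none_mem_open_hat {t : Set (Option X)} (ht : @IsOpen _ (hatTop G) t) (hn : none ∈ t) :
    ∃ C ∈ G.Closeds, @IsCompact X G.topol C ∧ (some '' C)ᶜ ⊆ t := by
  letI := G.topol
  induction ht with
  | basic s hs =>
      rcases hs with ⟨U, -, rfl⟩ | ⟨C, hC, hcpt, rfl⟩
      · simp at hn
      · exact ⟨C, hC, hcpt, le_refl _⟩
  | univ => exact ⟨∅, G.closeds_empty, (@isCompact_empty X G.topol), subset_univ _⟩
  | inter s t _ _ ihs iht =>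
      obtain ⟨C₁, hC₁, hcpt₁, hsub₁⟩ := ihs hn.1
      obtain ⟨C₂, hC₂, hcpt₂, hsub₂⟩ := iht hn.2
      refine ⟨C₁ ∪ C₂, ?_, hcpt₁.union hcpt₂, ?_⟩
      · simpa [GenTop.Closeds, compl_union] using G.opens_inter hC₁ hC₂
      · rw [image_union, compl_union]
        exact subset_inter ((inter_subset_left).trans hsub₁)
          ((inter_subset_right).trans hsub₂)
  | sUnion S hS ih =>
      obtain ⟨s, hsS, hns⟩ := hn
      obtain ⟨C, hC, hcpt, hsub⟩ := ih s hsS hns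
      exact ⟨C, hC, hcpt, hsub.trans (subset_sUnion_of_mem hsS)⟩

lemma exhat_of_compact {U : Set X} (hU : U ∈ G.Opens)
    (hc : @IsCompact X G.topol Uᶜ) :
    ExHat G U = some '' U ∪ {none} := by
  letI := hatTop G
  have hcl : IsClosed (some '' Uᶜ) := by
    rw [← isOpen_compl_iff]
    exact isOpen_hat_compl G (by simpa [GenTop.Closeds] using hU) hc
  show (closure (some '' Uᶜ))ᶜ = _
  rw [hcl.closure_eq, compl_some_image, compl_compl]

lemma exhat_of_noncompact {U : Set X} (hU : U ∈ G.Opens)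
    (hc : ¬ @IsCompact X G.topol Uᶜ) :
    ExHat G U = some '' U := by
  letI := G.topol
  letI := hatTop G
  have hclosure : closure (some '' Uᶜ) = some '' Uᶜ ∪ {none} := by
    apply subset_antisymm
    · apply closure_minimal (subset_union_left)
      rw [← isOpen_compl_iff]
      have : (some '' Uᶜ ∪ {none})ᶜ = some '' U := by
        ext (_ | x) <;> simp
      rw [this]
      exact isOpen_hat_some_image G hU
    · apply union_subset subset_closure
      rw [singleton_subset_iff, mem_closure_iff]
      intro o ho hno
      obtain ⟨C, hC, hcpt, hsub⟩ := none_mem_open_hat G ho hno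
      have hne : ¬ (Uᶜ ⊆ C) := fun h =>
        hc (hcpt.of_isClosed_subset (G.isClosed_of_closeds
          (by simpa [GenTop.Closeds] using hU)) h)
      obtain ⟨x, hxU, hxC⟩ := not_subset.mp hne
      exact ⟨some x, hsub (by simpa using hxC), ⟨x, hxU, rfl⟩⟩
  show (closure (some '' Uᶜ))ᶜ = _
  rw [hclosure]
  ext (_ | x) <;> simp

end Aux
/-- For the Alexandroff strict compactification of a weakly normal gts with
locally compact Hausdorff non-compact topologization, the extension operator is
finitely additive iff of any two disjoint closed sets at least one is
topologically compact. -/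
theorem stmt_16 {X : Type u} (G : GenTop X) (hwn : G.WeaklyNormal)
    (hlc : @LocallyCompactSpace X G.topol) (h2 : @T2Space X G.topol)
    (hnc : ¬ @CompactSpace X G.topol) :
    (∀ U ∈ G.Opens, ∀ V ∈ G.Opens, ∃ W ∈ G.Opens,
        ExHat G U ∪ ExHat G V = ExHat G W) ↔
      (∀ A ∈ G.Closeds, ∀ B ∈ G.Closeds, Disjoint A B →
        @IsCompact X G.topol A ∨ @IsCompact X G.topol B) := by
  letI := G.topol
  constructor
  · intro h A hA B hB hdisj
    by_contra hcon
    push_neg at hcon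
    obtain ⟨hAnc, hBnc⟩ := hcon
    obtain ⟨W, hW, hEq⟩ := h Aᶜ hA Bᶜ hB
    rw [exhat_of_noncompact G hA (by rwa [compl_compl]),
        exhat_of_noncompact G hB (by rwa [compl_compl]), ← image_union,
        (by rw [← compl_inter, disjoint_iff_inter_eq_empty.mp hdisj, compl_empty] :
          Aᶜ ∪ Bᶜ = univ)] at hEq
    by_cases hWc : IsCompact Wᶜ
    · rw [exhat_of_compact G hW hWc] at hEq
      have : (none : Option X) ∈ some '' (univ : Set X) := hEq ▸ Or.inr rfl
      simp at this
    · rw [exhat_of_noncompact G hW hWc] at hEq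
      have hWuniv : W = univ := (image_eq_image (Option.some_injective X)).mp hEq.symm
      exact hWc (by rw [hWuniv, compl_univ]; exact isCompact_empty)
  · intro h U hU V hV
    refine ⟨U ∪ V, G.opens_union hU hV, ?_⟩
    by_cases hUc : IsCompact Uᶜ
    · have hUVc : IsCompact (U ∪ V)ᶜ := by
        rw [compl_union]
        exact hUc.of_isClosed_subset
          (by rw [← isOpen_compl_iff, compl_inter, compl_compl, compl_compl]
              exact G.isOpen_of_opens (G.opens_union hU hV))
          inter_subset_left
      rw [exhat_of_compact G hU hUc, exhat_of_compact G (G.opens_union hU hV) hUVc,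
        image_union]
      by_cases hVc : IsCompact Vᶜ
      · rw [exhat_of_compact G hV hVc, union_union_union_comm, union_self]
      · rw [exhat_of_noncompact G hV hVc, union_right_comm]
    · by_cases hVc : IsCompact Vᶜ
      · have hUVc : IsCompact (U ∪ V)ᶜ := by
          rw [compl_union]
          exact hVc.of_isClosed_subset
            (by rw [← isOpen_compl_iff, compl_inter, compl_compl, compl_compl]
                exact G.isOpen_of_opens (G.opens_union hU hV))
            inter_subset_right
        rw [exhat_of_compact G hV hVc, exhat_of_compact G (G.opens_union hU hV) hUVc,
          exhat_of_noncompact G hU hUc, image_union, ← union_assoc]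
      · have hUVnc : ¬ IsCompact (U ∪ V)ᶜ := by
          intro hK
          rw [compl_union] at hK
          obtain ⟨O, hO, hKO, hclO⟩ := G.exists_open_relcompact hlc h2 hK
          have hAcl : Uᶜ ∩ Oᶜ ∈ G.Closeds := by
            simp only [GenTop.Closeds, mem_setOf_eq, compl_inter, compl_compl]
            exact G.opens_union hU hO
          have hBcl : Vᶜ ∩ Oᶜ ∈ G.Closeds := by
            simp only [GenTop.Closeds, mem_setOf_eq, compl_inter, compl_compl]
            exact G.opens_union hV hO
          have hdisj : Disjoint (Uᶜ ∩ Oᶜ) (Vᶜ ∩ Oᶜ) := by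
            rw [disjoint_iff_inter_eq_empty]
            apply eq_empty_of_subset_empty
            intro x ⟨⟨hxU, hxO⟩, hxV, _⟩
            exact hxO (hKO ⟨hxU, hxV⟩)
          rcases h _ hAcl _ hBcl hdisj with hc | hc
          · apply hUc
            refine (hc.union hclO).of_isClosed_subset
              (by rw [← isOpen_compl_iff, compl_compl]; exact G.isOpen_of_opens hU) ?_
            intro x hx
            by_cases hxO : x ∈ O
            · exact Or.inr (subset_closure hxO)
            · exact Or.inl ⟨hx, hxO⟩
          · apply hVc
            refine (hc.union hclO).of_isClosed_subset
              (by rw [← isOpen_compl_iff, compl_compl]; exact G.isOpen_of_opens hV) ?_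
            intro x hx
            by_cases hxO : x ∈ O
            · exact Or.inr (subset_closure hxO)
            · exact Or.inl ⟨hx, hxO⟩
        rw [exhat_of_noncompact G hU hUc, exhat_of_noncompact G hV hVc,
          exhat_of_noncompact G (G.opens_union hU hV) hUVnc, image_union]
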